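/- Let G be a k-regular graph on n vertices with n ≥ 4k, and let x be a vertex of G. Then the number of cotriangles T of G such that x is adjacent to at least two vertices of T is at most C(k,2)·(n-2k) + C(k,3). -/

import Mathlib

open SimpleGraph Finset

set_option maxRecDepth 8000

theorem cotriangles_adjacent_to_vertex_le
    {V : Type*} [Fintype V] [DecidableEq V]
    (G : SimpleGraph V) [DecidableRel G.Adj]
    (n k : ℕ) (hn : Fintype.card V = n) (hk : G.IsRegularOfDegree k)
    (hnk : 4 * k ≤ n) (x : V) :
    {s : Finset V | Gᶜ.IsNClique 3 s ∧
        2 ≤ {v : V | v ∈ s ∧ G.Adj x v}.ncard}.ncard ≤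
      k.choose 2 * (n - 2 * k) + k.choose 3 := by
  classical
  subst hn
  set A : Finset V := G.neighborFinset x with hA
  have hAcard : A.card = k := (G.card_neighborFinset_eq_degree x).trans (hk x)
  set Q : Finset (Finset V) := A.powersetCard 2 with hQ
  set P : Finset (Finset V) := Q.filter (fun p => ∀ u ∈ p, ∀ v ∈ p, ¬ G.Adj u v) with hP
  set E : Finset (Finset V) := Q.filter (fun p => ¬ ∀ u ∈ p, ∀ v ∈ p, ¬ G.Adj u v) with hE
  set W : Finset V → Finset V := fun p =>
    Finset.univ.filter (fun w => w ∉ A ∧ ∀ u ∈ p, ¬ G.Adj u w) with hW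
  set T : Finset (Finset V) := Finset.univ.filter (fun s =>
    Gᶜ.IsNClique 3 s ∧ 2 ≤ (s.filter (fun v => G.Adj x v)).card) with hT
  -- Step 0 : the set in the statement has ncard = T.card
  have h0 : {s : Finset V | Gᶜ.IsNClique 3 s ∧
      2 ≤ {v : V | v ∈ s ∧ G.Adj x v}.ncard}.ncard = T.card := by
    have hset : {s : Finset V | Gᶜ.IsNClique 3 s ∧
        2 ≤ {v : V | v ∈ s ∧ G.Adj x v}.ncard} = ↑T := by
      ext s
      have hv : {v : V | v ∈ s ∧ G.Adj x v} = ↑(s.filter (fun v => G.Adj x v)) := by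
        ext v; simp
      rw [Set.mem_setOf_eq, mem_coe, hT, mem_filter, hv, Set.ncard_coe_finset]
      simp
    rw [hset, Set.ncard_coe_finset]
  rw [h0]
  -- Step 1 : T is contained in a union
  have hsub : T ⊆ A.powersetCard 3 ∪
      P.biUnion (fun p => (W p).image (fun w => insert w p)) := by
    intro s hs
    rw [hT, mem_filter] at hs
    obtain ⟨-, hclique, hcard2⟩ := hs
    have hcard3 : s.card = 3 := hclique.2
    have hfil : s.filter (fun v => G.Adj x v) = s ∩ A := by
      ext v
      simp [hA, SimpleGraph.mem_neighborFinset, and_comm]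
    rw [hfil] at hcard2
    have hpw : ∀ u ∈ s, ∀ v ∈ s, ¬ G.Adj u v := by
      intro u hu v hv hadj
      rcases eq_or_ne u v with rfl | hne
      · exact G.irrefl hadj
      · exact ((G.compl_adj u v).mp (hclique.1 hu hv hne)).2 hadj
    by_cases hsA : s ⊆ A
    · exact mem_union_left _ (mem_powersetCard.mpr ⟨hsA, hcard3⟩)
    · have hle : (s ∩ A).card ≤ 3 := hcard3 ▸ card_le_card inter_subset_left
      have hne3 : (s ∩ A).card ≠ 3 := by
        intro h3
        have heq : s ∩ A = s :=
          eq_of_subset_of_card_le inter_subset_left (by rw [h3, hcard3])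
        exact hsA (heq ▸ inter_subset_right)
      have h2 : (s ∩ A).card = 2 := by omega
      have hpP : s ∩ A ∈ P := by
        rw [hP, mem_filter]
        refine ⟨mem_powersetCard.mpr ⟨inter_subset_right, h2⟩, ?_⟩
        intro u hu v hv
        exact hpw u (mem_of_mem_inter_left hu) v (mem_of_mem_inter_left hv)
      have hsd : (s \ A).card = 1 := by
        have := card_inter_add_card_sdiff s A
        omega
      obtain ⟨w, hw⟩ := card_eq_one.mp hsd
      have hws : w ∈ s \ A := hw ▸ mem_singleton_self w
      have hseq : s = insert w (s ∩ A) := by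
        ext a
        constructor
        · intro ha
          by_cases haA : a ∈ A
          · exact mem_insert_of_mem (mem_inter_of_mem ha haA)
          · have : a ∈ s \ A := mem_sdiff.mpr ⟨ha, haA⟩
            rw [hw, mem_singleton] at this
            exact this ▸ mem_insert_self _ _
        · intro ha
          rcases mem_insert.mp ha with rfl | ha
          · exact (mem_sdiff.mp hws).1
          · exact mem_of_mem_inter_left ha
      have hwW : w ∈ W (s ∩ A) := by
        rw [hW, mem_filter]
        exact ⟨mem_univ w, (mem_sdiff.mp hws).2,
          fun u hu => hpw u (mem_of_mem_inter_left hu) w (mem_sdiff.mp hws).1⟩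
      exact mem_union_right _ (mem_biUnion.mpr ⟨s ∩ A, hpP,
        mem_image.mpr ⟨w, hwW, hseq.symm⟩⟩)
  -- Step 2 : per-pair bound
  have hWcard : ∀ p ∈ P, (W p).card ≤
      (Fintype.card V - 2 * k) + ∑ v ∈ p, (A.filter (fun u => G.Adj v u)).card := by
    intro p hp
    rw [hP, mem_filter] at hp
    obtain ⟨hpQ, hpind⟩ := hp
    obtain ⟨hpA, hp2⟩ := mem_powersetCard.mp hpQ
    obtain ⟨v, hv⟩ : p.Nonempty := by rw [← card_pos, hp2]; norm_num
    have hsub2 : W p ⊆ univ \ (A ∪ G.neighborFinset v) := by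
      intro w hwm
      rw [hW, mem_filter] at hwm
      rw [mem_sdiff, mem_union]
      push_neg
      exact ⟨mem_univ w, hwm.2.1, by
        rw [SimpleGraph.mem_neighborFinset]; exact hwm.2.2 v hv⟩
    have h1 : (univ \ (A ∪ G.neighborFinset v)).card
        = Fintype.card V - (A ∪ G.neighborFinset v).card := by
      rw [card_sdiff_of_subset (subset_univ _), card_univ]
    have h3 : A ∩ G.neighborFinset v = A.filter (fun u => G.Adj v u) := by
      ext u; simp [SimpleGraph.mem_neighborFinset]
    have h2 : (A ∪ G.neighborFinset v).card + (A.filter (fun u => G.Adj v u)).card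
        = k + k := by
      rw [← h3, card_union_add_card_inter, hAcard,
        G.card_neighborFinset_eq_degree, hk v]
    have h4 : (A.filter (fun u => G.Adj v u)).card
        ≤ ∑ u ∈ p, (A.filter (fun w => G.Adj u w)).card :=
      single_le_sum (f := fun u => (A.filter (fun w => G.Adj u w)).card)
        (fun _ _ => Nat.zero_le _) hv
    have h5 := card_le_card hsub2
    omega
  -- Step 4 : exchange sums and bound pair-multiplicities
  have hcnt : ∀ v ∈ A, (P.filter (fun p => v ∈ p)).card ≤ k - 1 := by
    intro v hvA
    have hinj : (P.filter (fun p => v ∈ p)).card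
        ≤ ((A.erase v).powersetCard 1).card := by
      apply card_le_card_of_injOn (fun p => p.erase v)
      · intro p hp
        rw [mem_coe, mem_filter, hP, mem_filter] at hp
        obtain ⟨⟨hpQ, -⟩, hvp⟩ := hp
        obtain ⟨hpA, hp2⟩ := mem_powersetCard.mp hpQ
        exact mem_powersetCard.mpr ⟨erase_subset_erase v hpA,
          by rw [card_erase_of_mem hvp, hp2]⟩
      · intro p hp q hq hpq
        simp only [coe_filter, Set.mem_setOf_eq] at hp hq
        have hpq' : p.erase v = q.erase v := hpq
        have : insert v (p.erase v) = insert v (q.erase v) := by rw [hpq']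
        rwa [insert_erase hp.2, insert_erase hq.2] at this
    have : ((A.erase v).powersetCard 1).card = k - 1 := by
      rw [card_powersetCard, card_erase_of_mem hvA, hAcard, Nat.choose_one_right]
    omega
  have hstep4 : ∑ p ∈ P, ∑ v ∈ p, (A.filter (fun u => G.Adj v u)).card
      ≤ (k - 1) * ∑ v ∈ A, (A.filter (fun u => G.Adj v u)).card := by
    have hre : ∀ p ∈ P, ∑ v ∈ p, (A.filter (fun u => G.Adj v u)).card
        = ∑ v ∈ A, if v ∈ p then (A.filter (fun u => G.Adj v u)).card else 0 := by
      intro p hp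
      rw [sum_ite_mem]
      congr 1
      rw [hP, mem_filter] at hp
      exact (inter_eq_right.mpr (mem_powersetCard.mp hp.1).1).symm
    rw [sum_congr rfl hre, sum_comm]
    have hin : ∀ v ∈ A,
        (∑ p ∈ P, if v ∈ p then (A.filter (fun u => G.Adj v u)).card else 0)
        = (P.filter (fun p => v ∈ p)).card * (A.filter (fun u => G.Adj v u)).card := by
      intro v _
      rw [← sum_filter, sum_const, smul_eq_mul]
    rw [sum_congr rfl hin, mul_sum]
    exact sum_le_sum (fun v hv => Nat.mul_le_mul_right _ (hcnt v hv))
  -- Step 5 : handshake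
  have hhs : ∑ v ∈ A, (A.filter (fun u => G.Adj v u)).card ≤ 2 * E.card := by
    set D : Finset (V × V) := (A ×ˢ A).filter (fun q => G.Adj q.1 q.2) with hD
    have hDcard : D.card = ∑ v ∈ A, (A.filter (fun u => G.Adj v u)).card := by
      rw [hD, card_filter, sum_product]
      exact sum_congr rfl (fun v _ => by rw [card_filter])
    rw [← hDcard]
    have hfib : ∀ t ∈ D.image (fun q => ({q.1, q.2} : Finset V)),
        (D.filter (fun q => ({q.1, q.2} : Finset V) = t)).card ≤ 2 := by
      intro t ht
      obtain ⟨q0, hq0, hq0t⟩ := mem_image.mp ht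
      have hadj0 : G.Adj q0.1 q0.2 := (mem_filter.mp hq0).2
      have hsub3 : D.filter (fun q => ({q.1, q.2} : Finset V) = t)
          ⊆ {(q0.1, q0.2), (q0.2, q0.1)} := by
        intro q hq
        obtain ⟨hqD, hqt⟩ := mem_filter.mp hq
        have hadj : G.Adj q.1 q.2 := (mem_filter.mp hqD).2
        have heq : ({q.1, q.2} : Finset V) = {q0.1, q0.2} := by rw [hqt, ← hq0t]
        have h1 : q.1 = q0.1 ∨ q.1 = q0.2 := by
          have : q.1 ∈ ({q0.1, q0.2} : Finset V) := heq ▸ mem_insert_self _ _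
          simpa using this
        have h2 : q.2 = q0.1 ∨ q.2 = q0.2 := by
          have : q.2 ∈ ({q0.1, q0.2} : Finset V) :=
            heq ▸ mem_insert_of_mem (mem_singleton_self _)
          simpa using this
        have hne : q.1 ≠ q.2 := hadj.ne
        simp only [mem_insert, mem_singleton, Prod.ext_iff]
        rcases h1 with h1 | h1 <;> rcases h2 with h2 | h2
        · exact absurd (h1.trans h2.symm) hne
        · exact Or.inl ⟨h1, h2⟩
        · exact Or.inr ⟨h1, h2⟩
        · exact absurd (h1.trans h2.symm) hne
      calc (D.filter (fun q => ({q.1, q.2} : Finset V) = t)).card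
          ≤ ({(q0.1, q0.2), (q0.2, q0.1)} : Finset (V × V)).card := card_le_card hsub3
        _ ≤ 2 := (card_insert_le _ _).trans (by simp)
    have himg : D.image (fun q => ({q.1, q.2} : Finset V)) ⊆ E := by
      intro t ht
      obtain ⟨q, hq, rfl⟩ := mem_image.mp ht
      obtain ⟨hqmem, hadj⟩ := mem_filter.mp hq
      obtain ⟨hq1, hq2⟩ := mem_product.mp hqmem
      rw [hE, mem_filter]
      refine ⟨mem_powersetCard.mpr ⟨?_, ?_⟩, ?_⟩
      · intro a ha
        rcases mem_insert.mp ha with rfl | ha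
        · exact hq1
        · exact (mem_singleton.mp ha) ▸ hq2
      · rw [card_insert_of_notMem (by simp [hadj.ne]), card_singleton]
      · intro hall
        exact hall q.1 (mem_insert_self _ _)
          q.2 (mem_insert_of_mem (mem_singleton_self _)) hadj
    calc D.card ≤ 2 * (D.image (fun q => ({q.1, q.2} : Finset V))).card :=
          card_le_mul_card_image _ 2 hfib
      _ ≤ 2 * E.card := Nat.mul_le_mul_left _ (card_le_card himg)
  -- Step 6 : P and E partition Q
  have hPE : P.card + E.card = k.choose 2 := by
    rw [hP, hE, card_filter_add_card_filter_not, hQ, card_powersetCard, hAcard]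
  -- Assemble
  have hPle : P.card ≤ k.choose 2 := by omega
  calc T.card ≤ (A.powersetCard 3 ∪
        P.biUnion (fun p => (W p).image (fun w => insert w p))).card :=
        card_le_card hsub
    _ ≤ (A.powersetCard 3).card
        + (P.biUnion (fun p => (W p).image (fun w => insert w p))).card :=
        card_union_le _ _
    _ ≤ k.choose 3 + ∑ p ∈ P, (W p).card := by
        refine Nat.add_le_add ?_ ((card_biUnion_le).trans
          (sum_le_sum (fun p _ => card_image_le)))
        rw [card_powersetCard, hAcard]
    _ ≤ k.choose 3 + ∑ p ∈ P, ((Fintype.card V - 2 * k)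
        + ∑ v ∈ p, (A.filter (fun u => G.Adj v u)).card) :=
        Nat.add_le_add_left (sum_le_sum hWcard) _
    _ = k.choose 3 + (P.card * (Fintype.card V - 2 * k)
        + ∑ p ∈ P, ∑ v ∈ p, (A.filter (fun u => G.Adj v u)).card) := by
        rw [sum_add_distrib, sum_const, smul_eq_mul]
    _ ≤ k.choose 3 + (P.card * (Fintype.card V - 2 * k)
        + (k - 1) * (2 * E.card)) := by
        refine Nat.add_le_add_left (Nat.add_le_add_left ?_ _) _
        exact hstep4.trans (Nat.mul_le_mul_left _ hhs)
    _ ≤ k.choose 3 + (P.card * (Fintype.card V - 2 * k)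
        + E.card * (Fintype.card V - 2 * k)) := by
        refine Nat.add_le_add_left (Nat.add_le_add_left ?_ _) _
        have h2k : (k - 1) * 2 ≤ Fintype.card V - 2 * k := by omega
        calc (k - 1) * (2 * E.card) = ((k - 1) * 2) * E.card := by ring
          _ ≤ (Fintype.card V - 2 * k) * E.card := Nat.mul_le_mul_right _ h2k
          _ = E.card * (Fintype.card V - 2 * k) := Nat.mul_comm _ _
    _ = k.choose 2 * (Fintype.card V - 2 * k) + k.choose 3 := by
        rw [← Nat.add_mul, hPE]; ring
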